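/- Let f : [0, n] → ℝ be continuous with f(0) = 0 and f(n) = n, where n is a positive integer. Then there exists x ∈ [0, n-1] such that f(x+1) - f(x) = 1. -/
import Mathlib

theorem average_pace (n : ℕ) (hn : 0 < n) (f : ℝ → ℝ)
    (hf : ContinuousOn f (Set.Icc 0 (n : ℝ)))
    (h0 : f 0 = 0) (hn' : f (n : ℝ) = (n : ℝ)) :
    ∃ x ∈ Set.Icc (0 : ℝ) ((n : ℝ) - 1), f (x + 1) - f x = 1 := by
  set g : ℝ → ℝ := fun x => f (x + 1) - f x - 1 with hg
  -- g continuous on [0, n-1]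
  have hsub1 : ∀ x ∈ Set.Icc (0:ℝ) ((n:ℝ) - 1), x ∈ Set.Icc (0:ℝ) (n:ℝ) := by
    intro x hx
    exact ⟨hx.1, hx.2.trans (by linarith)⟩
  have hsub2 : ∀ x ∈ Set.Icc (0:ℝ) ((n:ℝ) - 1), x + 1 ∈ Set.Icc (0:ℝ) (n:ℝ) := by
    intro x hx
    exact ⟨by linarith [hx.1], by linarith [hx.2]⟩
  have hgc : ContinuousOn g (Set.Icc 0 ((n:ℝ) - 1)) := by
    apply ContinuousOn.sub
    apply ContinuousOn.sub
    · exact (hf.comp (continuousOn_id.add continuousOn_const) hsub2)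
    · exact hf.mono hsub1
    · exact continuousOn_const
  -- telescoping sum of g at integer points is 0
  have hsum : ∑ k ∈ Finset.range n, g (k : ℝ) = 0 := by
    have : ∑ k ∈ Finset.range n, g (k : ℝ)
        = ∑ k ∈ Finset.range n, (f ((k:ℝ) + 1) - f (k : ℝ)) - n := by
      simp [hg, Finset.sum_sub_distrib]
    rw [this]
    have htel : ∑ k ∈ Finset.range n, (f ((k:ℝ) + 1) - f (k : ℝ)) = f n - f 0 := by
      have := Finset.sum_range_sub (fun k : ℕ => f (k : ℝ)) n
      simpa [Nat.cast_succ] using this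
    rw [htel, h0, hn']
    ring
  -- exists i with g i ≤ 0 and j with g j ≥ 0
  have hne : (Finset.range n).Nonempty := ⟨0, Finset.mem_range.mpr hn⟩
  have hex_le : ∃ i ∈ Finset.range n, g (i : ℝ) ≤ 0 := by
    by_contra h
    push_neg at h
    have : (0:ℝ) < ∑ k ∈ Finset.range n, g (k : ℝ) :=
      Finset.sum_pos (fun k hk => h k hk) hne
    linarith [hsum]
  have hex_ge : ∃ j ∈ Finset.range n, 0 ≤ g (j : ℝ) := by
    by_contra h
    push_neg at h
    have : ∑ k ∈ Finset.range n, g (k : ℝ) < 0 :=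
      Finset.sum_neg (fun k hk => h k hk) hne
    linarith [hsum]
  obtain ⟨i, hi, hgi⟩ := hex_le
  obtain ⟨j, hj, hgj⟩ := hex_ge
  have hiI : (i : ℝ) ∈ Set.Icc (0:ℝ) ((n:ℝ) - 1) := by
    constructor
    · positivity
    · have : (i:ℝ) + 1 ≤ n := by exact_mod_cast Nat.succ_le_of_lt (Finset.mem_range.mp hi)
      linarith
  have hjI : (j : ℝ) ∈ Set.Icc (0:ℝ) ((n:ℝ) - 1) := by
    constructor
    · positivity
    · have : (j:ℝ) + 1 ≤ n := by exact_mod_cast Nat.succ_le_of_lt (Finset.mem_range.mp hj)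
      linarith
  have huIcc : Set.uIcc (i:ℝ) (j:ℝ) ⊆ Set.Icc (0:ℝ) ((n:ℝ) - 1) := by
    exact Set.OrdConnected.uIcc_subset Set.ordConnected_Icc hiI hjI
  have := intermediate_value_uIcc (hgc.mono huIcc)
  have h0mem : (0:ℝ) ∈ Set.uIcc (g i) (g j) := by
    rw [Set.mem_uIcc]
    left; exact ⟨hgi, hgj⟩
  obtain ⟨x, hx, hgx⟩ := this h0mem
  refine ⟨x, huIcc hx, ?_⟩
  simp only [hg] at hgx
  linarith
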